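/- Let X₁,…,X_d be Hermitian n×n complex matrices. For any two points λ, ν ∈ ℝ^d, |μ^Q_λ(X₁,…,X_d) − μ^Q_ν(X₁,…,X_d)| ≤ ‖λ − ν‖, where the norm on the right is the Euclidean norm on ℝ^d. That is, the indicator function of the quadratic pseudospectrum is Lipschitz with constant 1. -/

import Mathlib

open scoped ComplexConjugate



/-- The smallest real eigenvalue of a matrix: for a Hermitian matrix this is the
smallest eigenvalue. -/
noncomputable def minEig {m : Type*} [Fintype m] [DecidableEq m] (A : Matrix m m ℂ) : ℝ :=
  sInf {c : ℝ | (c : ℂ) ∈ spectrum ℂ A}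

/-- The quadratic composite operator `Q_λ(X₁,…,X_d) = Σ_j (X_j − λ_j I)²`. -/
noncomputable def Qop {n d : ℕ} (X : Fin d → Matrix (Fin n) (Fin n) ℂ) (lam : Fin d → ℝ) :
    Matrix (Fin n) (Fin n) ℂ :=
  ∑ j, (X j - (lam j : ℂ) • 1) ^ 2



section aux

variable {n : ℕ}

-- the set defining minEig equals range of eigenvalues
lemma minEig_set_eq {A : Matrix (Fin n) (Fin n) ℂ} (hA : A.IsHermitian) :
    {c : ℝ | (c : ℂ) ∈ spectrum ℂ A} = Set.range hA.eigenvalues := by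
  rw [← hA.spectrum_real_eq_range_eigenvalues]
  ext c
  simp only [Set.mem_setOf_eq]
  rw [← Complex.coe_algebraMap, spectrum.algebraMap_mem_iff]

lemma minEig_exists (hn : 0 < n) {A : Matrix (Fin n) (Fin n) ℂ} (hA : A.IsHermitian) :
    ∃ i₀ : Fin n, minEig A = hA.eigenvalues i₀ ∧ ∀ i, hA.eigenvalues i₀ ≤ hA.eigenvalues i := by
  haveI : Nonempty (Fin n) := ⟨⟨0, hn⟩⟩
  obtain ⟨i₀, hi₀⟩ := Finite.exists_min hA.eigenvalues
  refine ⟨i₀, ?_, hi₀⟩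
  have h := minEig_set_eq hA
  rw [minEig, h]
  exact IsLeast.csInf_eq ⟨⟨i₀, rfl⟩, by rintro x ⟨i, rfl⟩; exact hi₀ i⟩

-- quadratic form in eigenbasis
lemma re_inner_eq {A : Matrix (Fin n) (Fin n) ℂ} (hA : A.IsHermitian)
    (v : EuclideanSpace ℂ (Fin n)) :
    (inner ℂ v (Matrix.toEuclideanLin A v) : ℂ).re
      = ∑ i, hA.eigenvalues i * ‖hA.eigenvectorBasis.repr v i‖ ^ 2 := by
  set b := hA.eigenvectorBasis
  set T := Matrix.toEuclideanLin A
  have hsym : (LinearMap.IsSymmetric T) := (Matrix.isHermitian_iff_isSymmetric).1 hA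
  have hTb : ∀ i, T (b i) = (hA.eigenvalues i : ℂ) • b i := by
    intro i
    have := hA.mulVec_eigenvectorBasis i
    apply (WithLp.equiv 2 _).injective
    simpa [T, Matrix.ofLp_toEuclideanLin_apply, Complex.real_smul] using this
  have key : (inner ℂ v (T v) : ℂ) = ∑ i, (hA.eigenvalues i : ℂ) * (conj (b.repr v i) * b.repr v i) := by
    calc (inner ℂ v (T v) : ℂ) = inner ℂ (b.repr v) (b.repr (T v)) := (b.repr.inner_map_map v (T v)).symm
    _ = ∑ i, conj (b.repr v i) * (b.repr (T v) i) := by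
        rw [PiLp.inner_apply]
        exact Finset.sum_congr rfl fun i _ => by simp only [RCLike.inner_apply]; ring
    _ = ∑ i, (hA.eigenvalues i : ℂ) * (conj (b.repr v i) * b.repr v i) := by
        refine Finset.sum_congr rfl fun i _ => ?_
        have : b.repr (T v) i = (hA.eigenvalues i : ℂ) * b.repr v i := by
          rw [b.repr_apply_apply, ← hsym (b i) v, hTb i, inner_smul_left, b.repr_apply_apply]
          simp
        rw [this]; ring
  rw [key]
  rw [Complex.re_sum]
  refine Finset.sum_congr rfl fun i _ => ?_
  have : conj (b.repr v i) * b.repr v i = ((‖b.repr v i‖ : ℂ)) ^ 2 := by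
    rw [mul_comm, Complex.mul_conj']
  rw [this, ← Complex.ofReal_pow, ← Complex.ofReal_mul, Complex.ofReal_re]

end aux

section aux2

variable {n d : ℕ}

lemma rayleigh_lower (hn : 0 < n) {A : Matrix (Fin n) (Fin n) ℂ} (hA : A.IsHermitian)
    (v : EuclideanSpace ℂ (Fin n)) (hv : ‖v‖ = 1) :
    minEig A ≤ (inner ℂ v (Matrix.toEuclideanLin A v) : ℂ).re := by
  obtain ⟨i₀, h₀, hmin⟩ := minEig_exists hn hA
  rw [re_inner_eq hA v, h₀]
  have hsum : ∑ i, ‖hA.eigenvectorBasis.repr v i‖ ^ 2 = 1 := by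
    have h1 : ‖hA.eigenvectorBasis.repr v‖ = 1 := by
      rw [LinearIsometryEquiv.norm_map]; exact hv
    have h2 := EuclideanSpace.norm_eq (hA.eigenvectorBasis.repr v)
    rw [h1] at h2
    have h3 : (0:ℝ) ≤ ∑ i, ‖hA.eigenvectorBasis.repr v i‖ ^ 2 :=
      Finset.sum_nonneg fun i _ => sq_nonneg _
    nlinarith [Real.sq_sqrt h3, Real.sqrt_nonneg (∑ i, ‖hA.eigenvectorBasis.repr v i‖ ^ 2)]
  calc hA.eigenvalues i₀ = ∑ i, hA.eigenvalues i₀ * ‖hA.eigenvectorBasis.repr v i‖ ^ 2 := by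
        rw [← Finset.mul_sum, hsum, mul_one]
    _ ≤ ∑ i, hA.eigenvalues i * ‖hA.eigenvectorBasis.repr v i‖ ^ 2 :=
        Finset.sum_le_sum fun i _ => mul_le_mul_of_nonneg_right (hmin i) (sq_nonneg _)

lemma rayleigh_attained (hn : 0 < n) {A : Matrix (Fin n) (Fin n) ℂ} (hA : A.IsHermitian) :
    ∃ v : EuclideanSpace ℂ (Fin n), ‖v‖ = 1 ∧
      (inner ℂ v (Matrix.toEuclideanLin A v) : ℂ).re = minEig A := by
  obtain ⟨i₀, h₀, hmin⟩ := minEig_exists hn hA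
  refine ⟨hA.eigenvectorBasis i₀, hA.eigenvectorBasis.orthonormal.1 i₀, ?_⟩
  rw [re_inner_eq hA, h₀]
  rw [Finset.sum_eq_single i₀]
  · simp [OrthonormalBasis.repr_self, EuclideanSpace.single_apply]
  · intro i _ hi
    simp [OrthonormalBasis.repr_self, EuclideanSpace.single_apply, hi]
  · simp

lemma herm_smul_one (c : ℝ) : ((c : ℂ) • (1 : Matrix (Fin n) (Fin n) ℂ)).IsHermitian := by
  unfold Matrix.IsHermitian
  rw [Matrix.conjTranspose_smul, Matrix.conjTranspose_one]
  simp [Complex.star_def, Complex.conj_ofReal]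

lemma herm_B (X : Fin d → Matrix (Fin n) (Fin n) ℂ) (hX : ∀ j, (X j).IsHermitian)
    (lam : Fin d → ℝ) (j : Fin d) : (X j - (lam j : ℂ) • 1).IsHermitian :=
  (hX j).sub (herm_smul_one (lam j))

lemma herm_Qop (X : Fin d → Matrix (Fin n) (Fin n) ℂ) (hX : ∀ j, (X j).IsHermitian)
    (lam : Fin d → ℝ) : (Qop X lam).IsHermitian := by
  unfold Qop Matrix.IsHermitian
  rw [Matrix.conjTranspose_sum]
  exact Finset.sum_congr rfl fun j _ => (herm_B X hX lam j).pow 2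

lemma toEuclideanLin_sq (B : Matrix (Fin n) (Fin n) ℂ) (v : EuclideanSpace ℂ (Fin n)) :
    Matrix.toEuclideanLin (B ^ 2) v = Matrix.toEuclideanLin B (Matrix.toEuclideanLin B v) := by
  apply (WithLp.equiv 2 _).injective
  simp only [WithLp.equiv_apply, Matrix.ofLp_toEuclideanLin_apply, Matrix.mulVec_mulVec, pow_two]

lemma re_inner_Qop (X : Fin d → Matrix (Fin n) (Fin n) ℂ) (hX : ∀ j, (X j).IsHermitian)
    (lam : Fin d → ℝ) (v : EuclideanSpace ℂ (Fin n)) :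
    (inner ℂ v (Matrix.toEuclideanLin (Qop X lam) v) : ℂ).re
      = ∑ j, ‖Matrix.toEuclideanLin (X j - (lam j : ℂ) • 1) v‖ ^ 2 := by
  have : Matrix.toEuclideanLin (Qop X lam) v
      = ∑ j, Matrix.toEuclideanLin ((X j - (lam j : ℂ) • 1) ^ 2) v := by
    unfold Qop
    rw [map_sum]
    simp [LinearMap.sum_apply]
  rw [this, inner_sum, Complex.re_sum]
  refine Finset.sum_congr rfl fun j _ => ?_
  rw [toEuclideanLin_sq]
  have hsym := (Matrix.isHermitian_iff_isSymmetric).1 (herm_B X hX lam j)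
  rw [← hsym, inner_self_eq_norm_sq_to_K]
  norm_cast

end aux2

section aux3

variable {n d : ℕ}

lemma g_lip (X : Fin d → Matrix (Fin n) (Fin n) ℂ) (lam nu : Fin d → ℝ)
    (v : EuclideanSpace ℂ (Fin n)) (hv : ‖v‖ = 1) :
    Real.sqrt (∑ j, ‖Matrix.toEuclideanLin (X j - (lam j : ℂ) • 1) v‖ ^ 2)
      ≤ Real.sqrt (∑ j, ‖Matrix.toEuclideanLin (X j - (nu j : ℂ) • 1) v‖ ^ 2)
        + Real.sqrt (∑ j, (lam j - nu j) ^ 2) := by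
  set F := PiLp 2 (fun _ : Fin d => EuclideanSpace ℂ (Fin n))
  set wl : F := (WithLp.equiv 2 _).symm
    (fun j => Matrix.toEuclideanLin (X j - (lam j : ℂ) • 1) v)
  set wn : F := (WithLp.equiv 2 _).symm
    (fun j => Matrix.toEuclideanLin (X j - (nu j : ℂ) • 1) v)
  set u : F := (WithLp.equiv 2 _).symm
    (fun j => (((nu j - lam j : ℝ)) : ℂ) • v)
  have hwl : ‖wl‖ = Real.sqrt (∑ j, ‖Matrix.toEuclideanLin (X j - (lam j : ℂ) • 1) v‖ ^ 2) := by
    rw [PiLp.norm_eq_of_L2]; rfl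
  have hwn : ‖wn‖ = Real.sqrt (∑ j, ‖Matrix.toEuclideanLin (X j - (nu j : ℂ) • 1) v‖ ^ 2) := by
    rw [PiLp.norm_eq_of_L2]; rfl
  have hu : ‖u‖ = Real.sqrt (∑ j, (lam j - nu j) ^ 2) := by
    rw [PiLp.norm_eq_of_L2]
    congr 1
    refine Finset.sum_congr rfl fun j _ => ?_
    have : ‖(((nu j - lam j : ℝ)) : ℂ) • v‖ = |nu j - lam j| := by
      rw [norm_smul, hv, mul_one, Complex.norm_real, Real.norm_eq_abs]
    have huj : ‖u j‖ = |nu j - lam j| := this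
    rw [huj, sq_abs]
    ring
  have hdecomp : wl = wn + u := by
    apply (WithLp.equiv 2 _).injective
    funext j
    show Matrix.toEuclideanLin (X j - (lam j : ℂ) • 1) v
      = Matrix.toEuclideanLin (X j - (nu j : ℂ) • 1) v + (((nu j - lam j : ℝ)) : ℂ) • v
    have h1 : (X j - (lam j : ℂ) • 1) = (X j - (nu j : ℂ) • 1) + ((nu j - lam j : ℝ) : ℂ) • 1 := by
      push_cast
      rw [sub_smul]
      abel
    rw [h1, map_add, LinearMap.add_apply]
    congr 1
    rw [map_smul, LinearMap.smul_apply]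
    congr 1
    apply (WithLp.equiv 2 _).injective
    simp [Matrix.ofLp_toEuclideanLin_apply]
  calc Real.sqrt (∑ j, ‖Matrix.toEuclideanLin (X j - (lam j : ℂ) • 1) v‖ ^ 2) = ‖wl‖ := hwl.symm
    _ ≤ ‖wn‖ + ‖u‖ := by rw [hdecomp]; exact norm_add_le _ _
    _ = _ := by rw [hwn, hu]

lemma main_half (hn : 0 < n) (X : Fin d → Matrix (Fin n) (Fin n) ℂ)
    (hX : ∀ j, (X j).IsHermitian) (lam nu : Fin d → ℝ) :
    Real.sqrt (minEig (Qop X lam)) ≤ Real.sqrt (minEig (Qop X nu))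
      + Real.sqrt (∑ j, (lam j - nu j) ^ 2) := by
  obtain ⟨v, hv1, hv2⟩ := rayleigh_attained hn (herm_Qop X hX nu)
  have hnu : Real.sqrt (minEig (Qop X nu))
      = Real.sqrt (∑ j, ‖Matrix.toEuclideanLin (X j - (nu j : ℂ) • 1) v‖ ^ 2) := by
    rw [← hv2, re_inner_Qop X hX nu v]
  have hlam : Real.sqrt (minEig (Qop X lam))
      ≤ Real.sqrt (∑ j, ‖Matrix.toEuclideanLin (X j - (lam j : ℂ) • 1) v‖ ^ 2) := by
    rw [← re_inner_Qop X hX lam v]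
    exact Real.sqrt_le_sqrt (rayleigh_lower hn (herm_Qop X hX lam) v hv1)
  calc Real.sqrt (minEig (Qop X lam))
      ≤ Real.sqrt (∑ j, ‖Matrix.toEuclideanLin (X j - (lam j : ℂ) • 1) v‖ ^ 2) := hlam
    _ ≤ Real.sqrt (∑ j, ‖Matrix.toEuclideanLin (X j - (nu j : ℂ) • 1) v‖ ^ 2)
        + Real.sqrt (∑ j, (lam j - nu j) ^ 2) := g_lip X lam nu v hv1
    _ = _ := by rw [hnu]

end aux3

/-- the indicator function `λ ↦ μ^Q_λ(X₁,…,X_d)` of the quadratic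
pseudospectrum is Lipschitz with constant 1 (Euclidean norm on `ℝ^d`). -/
theorem quadratic_gap_lipschitz {n d : ℕ} (hn : 0 < n)
    (X : Fin d → Matrix (Fin n) (Fin n) ℂ) (hX : ∀ j, (X j).IsHermitian)
    (lam nu : Fin d → ℝ) :
    |Real.sqrt (minEig (Qop X lam)) - Real.sqrt (minEig (Qop X nu))| ≤
      Real.sqrt (∑ j, (lam j - nu j) ^ 2) := by
  rw [abs_sub_le_iff]
  constructor
  · rw [sub_le_iff_le_add, add_comm]
    exact main_half hn X hX lam nu
  · rw [sub_le_iff_le_add, add_comm]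
    have h : ∑ j, (nu j - lam j) ^ 2 = ∑ j, (lam j - nu j) ^ 2 :=
      Finset.sum_congr rfl fun j _ => by ring
    have := main_half hn X hX nu lam
    rwa [h] at this
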